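/- For natural numbers n, s and real x with 0 \le x < 1, nonzero real \beta, real r: \sum_{k=0}^{\infty} \binom{s+k}{k} (r + k\beta)^n x^k = \sum_{k=0}^{n} W_{\beta,r}(n,k) * \binom{s+k}{k} * k! * \beta^k * x^k / (1-x)^{s+k+1}. -/

import Mathlib

lemma key_nat (a b c : ℕ) :
    (a + (b + c)).choose (b + c) * ((b + c).descFactorial c) *
      (a.factorial * b.factorial) = (a + b + c).factorial := by
  rw [Nat.descFactorial_eq_factorial_mul_choose]
  have h1 : (b + c).choose c * c.factorial * b.factorial = (b + c).factorial := by
    have := Nat.choose_mul_factorial_mul_factorial (Nat.le_add_left c b)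
    simpa [Nat.add_sub_cancel] using this
  have h2 : (a + (b + c)).choose (b + c) * (b + c).factorial * a.factorial
      = (a + (b + c)).factorial := by
    have := Nat.choose_mul_factorial_mul_factorial (Nat.le_add_left (b + c) a)
    simpa [Nat.add_sub_cancel] using this
  calc (a + (b + c)).choose (b + c) * (c.factorial * (b + c).choose c) *
        (a.factorial * b.factorial)
      = (a + (b + c)).choose (b + c) * ((b + c).choose c * c.factorial * b.factorial)
          * a.factorial := by ring
    _ = (a + (b + c)).choose (b + c) * (b + c).factorial * a.factorial := by rw [h1]
    _ = (a + b + c).factorial := by rw [h2, Nat.add_assoc]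

lemma key_nat2 (s j m : ℕ) :
    (s + (m + j)).choose (m + j) * ((m + j).descFactorial j) =
      (m + (s + j)).choose (s + j) * ((s + j).descFactorial j) := by
  have h1 := key_nat s m j
  have h2 := key_nat m s j
  have hpos : 0 < s.factorial * m.factorial :=
    Nat.mul_pos s.factorial_pos m.factorial_pos
  apply Nat.eq_of_mul_eq_mul_right hpos
  rw [h1, mul_comm s.factorial m.factorial] at *
  rw [h2, Nat.add_comm m s]

lemma hasSum_aux (s j : ℕ) {x : ℝ} (hx0 : 0 ≤ x) (hx1 : x < 1) :
    HasSum (fun k : ℕ => ((s + k).choose k : ℝ) * (k.descFactorial j : ℝ) * x ^ k)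
      (((s + j).choose j : ℝ) * (j.factorial : ℝ) * x ^ j / (1 - x) ^ (s + j + 1)) := by
  have hx' : ‖x‖ < 1 := by rw [Real.norm_eq_abs, abs_of_nonneg hx0]; exact hx1
  have H := (hasSum_choose_mul_geometric_of_norm_lt_one (s + j) hx').mul_left
    (((s + j).choose j : ℝ) * (j.factorial : ℝ) * x ^ j)
  apply (hasSum_nat_add_iff' j).mp
  have hz : ∑ i ∈ Finset.range j, ((s + i).choose i : ℝ) * (i.descFactorial j : ℝ) * x ^ i
      = 0 := by
    apply Finset.sum_eq_zero
    intro i hi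
    rw [Finset.mem_range] at hi
    rw [Nat.descFactorial_eq_zero_iff_lt.mpr hi]
    simp
  rw [hz, sub_zero]
  rw [mul_one_div] at H
  convert H using 2 with m
  · rfl
  have hnat : (s + (m + j)).choose (m + j) * ((m + j).descFactorial j)
      = (m + (s + j)).choose (s + j) * ((s + j).choose j * j.factorial) := by
    rw [key_nat2, Nat.descFactorial_eq_factorial_mul_choose]; ring
  have hre : ((s + (m + j)).choose (m + j) : ℝ) * ((m + j).descFactorial j : ℝ)
      = ((m + (s + j)).choose (s + j) : ℝ) * (((s + j).choose j : ℝ) * (j.factorial : ℝ)) := by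
    exact_mod_cast congrArg (fun t : ℕ => (t : ℝ)) hnat
  rw [hre]
  ring

theorem sum_choose_mul_pow_arith_mul_pow (n s : ℕ) (β : ℝ) (hβ : β ≠ 0) (r : ℝ) (x : ℝ)
    (hx0 : 0 ≤ x) (hx1 : x < 1) (W : ℕ → ℕ → ℝ)
    (hW : ∀ N M : ℕ, (β * (M : ℝ) + r) ^ N =
      ∑ k ∈ Finset.range (N + 1), W N k * β ^ k * (M.descFactorial k : ℝ)) :
    HasSum (fun k : ℕ => ((s + k).choose k : ℝ) * (r + (k : ℝ) * β) ^ n * x ^ k)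
      (∑ k ∈ Finset.range (n + 1),
        W n k * ((s + k).choose k : ℝ) * (Nat.factorial k : ℝ) * β ^ k * x ^ k /
          (1 - x) ^ (s + k + 1)) := by
  have key : ∀ k : ℕ, ((s + k).choose k : ℝ) * (r + (k : ℝ) * β) ^ n * x ^ k
      = ∑ j ∈ Finset.range (n + 1),
          W n j * β ^ j * (((s + k).choose k : ℝ) * (k.descFactorial j : ℝ) * x ^ k) := by
    intro k
    rw [show r + (k : ℝ) * β = β * (k : ℝ) + r by ring, hW n k, Finset.mul_sum,
      Finset.sum_mul]
    exact Finset.sum_congr rfl fun j _ => by ring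
  simp_rw [key]
  have H := hasSum_sum (s := Finset.range (n + 1))
    (f := fun j k => W n j * β ^ j *
      (((s + k).choose k : ℝ) * (k.descFactorial j : ℝ) * x ^ k))
    (a := fun j => W n j * β ^ j *
      (((s + j).choose j : ℝ) * (j.factorial : ℝ) * x ^ j / (1 - x) ^ (s + j + 1)))
    (fun j _ => (hasSum_aux s j hx0 hx1).mul_left _)
  convert H using 1
  exact Finset.sum_congr rfl fun j _ => by ring
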